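/- Let Ψ(x) := (2/3)x^{3/2} - (3/4)d² ln x + φ with Ψ'(x) = x^{1/2} - (3/4)d²/x ≠ 0 for x ≥ x₀ > 1, and g(x) := d·(-x)^{-1/4} cos Ψ(-x)·χ_{(-∞,-x₀)}(x). Then for every Schwartz function φ ∈ 𝒮(ℝ) and every z ≥ x₀, lim_{t→0^+} ∫_{-∞}^{-z} g(x) φ(x t^{1/3}) dx = O(z^{-3/4}) as z → ∞; i.e., there exists C > 0 independent of z such that the limit exists and its absolute value is ≤ C z^{-3/4}. -/

import Mathlib

open Filter Real MeasureTheory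
open Set Topology

noncomputable def PP (k u : ℝ) : ℝ := u ^ ((1:ℝ)/2) - k / u
noncomputable def QQ (k u : ℝ) : ℝ := (1/2) * u ^ (-(1:ℝ)/2) + k / u^2

/-- positivity of the slope constant -/
lemma cc_pos {k x₀ : ℝ} (hk : 0 ≤ k) (hx₀ : 1 < x₀)
    (h : ∀ x ≥ x₀, PP k x ≠ 0) : 0 < 1 - k / x₀ ^ ((3:ℝ)/2) := by
  by_contra hc
  push_neg at hc
  have hx₀0 : (0:ℝ) < x₀ := by linarith
  have hx32 : (0:ℝ) < x₀ ^ ((3:ℝ)/2) := rpow_pos_of_pos hx₀0 _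
  have hkx : x₀ ^ ((3:ℝ)/2) ≤ k := by
    have := hc
    rw [sub_nonpos, le_div_iff₀ hx32, one_mul] at this
    linarith
  have hk0 : 0 < k := lt_of_lt_of_le hx32 hkx
  set u : ℝ := k ^ ((2:ℝ)/3) with hu
  have hu0 : 0 < u := rpow_pos_of_pos hk0 _
  have hux : x₀ ≤ u := by
    calc x₀ = (x₀ ^ ((3:ℝ)/2)) ^ ((2:ℝ)/3) := by
              rw [← Real.rpow_mul hx₀0.le]; norm_num
      _ ≤ u := Real.rpow_le_rpow hx32.le hkx (by norm_num)
  apply h u hux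
  have h1 : u ^ ((1:ℝ)/2) = k ^ ((1:ℝ)/3) := by
    rw [hu, ← Real.rpow_mul hk0.le]; norm_num
  have h2 : k / u = k ^ ((1:ℝ)/3) := by
    rw [hu, show (1:ℝ)/3 = 1 - 2/3 by norm_num, Real.rpow_sub hk0, Real.rpow_one]
  rw [PP, h1, h2, sub_self]

lemma PP_lb {k x₀ : ℝ} (hk : 0 ≤ k) (hx₀ : 1 < x₀) {u : ℝ} (hu : x₀ ≤ u) :
    (1 - k / x₀ ^ ((3:ℝ)/2)) * u ^ ((1:ℝ)/2) ≤ PP k u := by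
  have hx₀0 : (0:ℝ) < x₀ := by linarith
  have hu0 : (0:ℝ) < u := lt_of_lt_of_le hx₀0 hu
  have h12 : (0:ℝ) < u ^ ((1:ℝ)/2) := rpow_pos_of_pos hu0 _
  have hx32 : (0:ℝ) < x₀ ^ ((3:ℝ)/2) := rpow_pos_of_pos hx₀0 _
  have h32 : u ^ ((1:ℝ)/2) * u = u ^ ((3:ℝ)/2) := by
    rw [show ((3:ℝ)/2) = 1/2 + 1 by norm_num, Real.rpow_add hu0, Real.rpow_one]
  have hle : x₀ ^ ((3:ℝ)/2) ≤ u ^ ((1:ℝ)/2) * u := by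
    rw [h32]; exact Real.rpow_le_rpow hx₀0.le hu (by norm_num)
  have key : k / u ≤ k / x₀ ^ ((3:ℝ)/2) * u ^ ((1:ℝ)/2) := by
    rw [div_mul_eq_mul_div, div_le_div_iff₀ hu0 hx32]
    calc k * x₀ ^ ((3:ℝ)/2) ≤ k * (u ^ ((1:ℝ)/2) * u) := by
          exact mul_le_mul_of_nonneg_left hle hk
      _ = k * u ^ ((1:ℝ)/2) * u := by ring
  rw [PP]
  nlinarith [key]

lemma QQ_abs_le {k : ℝ} (hk : 0 ≤ k) {u : ℝ} (hu : 1 ≤ u) :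
    |QQ k u| ≤ (1/2 + k) * u ^ (-(1:ℝ)/2) := by
  have hu0 : (0:ℝ) < u := by linarith
  have h2 : k / u ^ 2 ≤ k * u ^ (-(1:ℝ)/2) := by
    rw [div_eq_mul_inv, ← Real.rpow_natCast u 2, ← Real.rpow_neg hu0.le]
    refine mul_le_mul_of_nonneg_left ?_ hk
    exact Real.rpow_le_rpow_of_exponent_le hu (by norm_num)
  have hpos : (0:ℝ) ≤ u ^ (-(1:ℝ)/2) := (rpow_pos_of_pos hu0 _).le
  have hq : (0:ℝ) ≤ QQ k u := by
    rw [QQ]; positivity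
  rw [abs_of_nonneg hq, QQ]
  nlinarith [hpos]

noncomputable def AA (d : ℝ) (φ : ℝ → ℝ) (s u : ℝ) : ℝ := d * (u ^ (-(1:ℝ)/4) * φ (-u * s))
noncomputable def AAd (d : ℝ) (φ φ' : ℝ → ℝ) (s u : ℝ) : ℝ :=
  d * ((-(1:ℝ)/4) * u ^ (-(5:ℝ)/4) * φ (-u * s) + u ^ (-(1:ℝ)/4) * (φ' (-u * s) * (-s)))
noncomputable def BB (d k : ℝ) (φ : ℝ → ℝ) (s u : ℝ) : ℝ := AA d φ s u / PP k u
noncomputable def BBd (d k : ℝ) (φ φ' : ℝ → ℝ) (s u : ℝ) : ℝ :=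
  (AAd d φ φ' s u * PP k u - AA d φ s u * QQ k u) / (PP k u)^2
noncomputable def HH (d k : ℝ) (Ψ φ : ℝ → ℝ) (s u : ℝ) : ℝ := Real.sin (Ψ u) * BB d k φ s u
noncomputable def HHd (d k : ℝ) (Ψ φ φ' : ℝ → ℝ) (s u : ℝ) : ℝ :=
  Real.cos (Ψ u) * AA d φ s u + Real.sin (Ψ u) * BBd d k φ φ' s u

lemma hasDerivAt_PP {k u : ℝ} (hu : 0 < u) : HasDerivAt (PP k) (QQ k u) u := by
  have h1 : HasDerivAt (fun x : ℝ => x ^ ((1:ℝ)/2)) ((1/2) * u ^ (-(1:ℝ)/2)) u := by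
    have := Real.hasDerivAt_rpow_const (x := u) (p := (1:ℝ)/2) (Or.inl hu.ne')
    convert this using 2; norm_num
  have h2 : HasDerivAt (fun x : ℝ => k / x) (-(k / u^2)) u := by
    have := (hasDerivAt_inv hu.ne').const_mul k
    simpa [div_eq_mul_inv, mul_comm] using this
  have := h1.sub h2
  convert this using 1
  · rfl
  · rfl
  · rfl
  rw [QQ]; ring

lemma hasDerivAt_Psi {k φ₀ u : ℝ} {Ψ : ℝ → ℝ}
    (hΨ : ∀ x, Ψ x = (2/3) * x ^ ((3:ℝ)/2) - k * Real.log x + φ₀)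
    (hu : 0 < u) : HasDerivAt Ψ (PP k u) u := by
  rw [show Ψ = _ from funext hΨ]
  have h1 : HasDerivAt (fun x : ℝ => x ^ ((3:ℝ)/2)) ((3/2) * u ^ ((1:ℝ)/2)) u := by
    have := Real.hasDerivAt_rpow_const (x := u) (p := (3:ℝ)/2) (Or.inl hu.ne')
    convert this using 2; norm_num
  have h2 : HasDerivAt (fun x : ℝ => k * Real.log x) (k * u⁻¹) u :=
    (Real.hasDerivAt_log hu.ne').const_mul k
  have := ((h1.const_mul (2/3:ℝ)).sub h2).add_const φ₀
  convert this using 1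
  · rfl
  · rfl
  · rfl
  rw [PP]; field_simp

lemma hasDerivAt_AA (d : ℝ) {φ φ' : ℝ → ℝ} (hφd : ∀ x, HasDerivAt φ (φ' x) x)
    (s : ℝ) {u : ℝ} (hu : 0 < u) : HasDerivAt (AA d φ s) (AAd d φ φ' s u) u := by
  have hlin : HasDerivAt (fun x : ℝ => -x * s) (-s) u := by
    simpa using ((hasDerivAt_id u).neg.mul_const s)
  have hinner : HasDerivAt (fun x : ℝ => φ (-x * s)) (φ' (-u * s) * (-s)) u := by
    simpa [Function.comp_def] using (hφd (-u * s)).comp u hlin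
  have hr : HasDerivAt (fun x : ℝ => x ^ (-(1:ℝ)/4)) ((-(1:ℝ)/4) * u ^ (-(5:ℝ)/4)) u := by
    have := Real.hasDerivAt_rpow_const (x := u) (p := -(1:ℝ)/4) (Or.inl hu.ne')
    convert this using 2; norm_num
  exact (hr.mul hinner).const_mul d

lemma hasDerivAt_HH {d k u : ℝ} {Ψ φ φ' : ℝ → ℝ}
    (hφd : ∀ x, HasDerivAt φ (φ' x) x) (hΨd : HasDerivAt Ψ (PP k u) u)
    (hu : 0 < u) (hPne : PP k u ≠ 0) (s : ℝ) :
    HasDerivAt (HH d k Ψ φ s) (HHd d k Ψ φ φ' s u) u := by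
  have hB : HasDerivAt (BB d k φ s) (BBd d k φ φ' s u) u :=
    (hasDerivAt_AA d hφd s hu).div (hasDerivAt_PP hu) hPne
  have hsin : HasDerivAt (fun x : ℝ => Real.sin (Ψ x)) (Real.cos (Ψ u) * PP k u) u := by
    simpa [Function.comp_def] using (Real.hasDerivAt_sin (Ψ u)).comp u hΨd
  have := hsin.mul hB
  convert this using 1
  · rfl
  · rfl
  · rfl
  rw [HHd, BB, BBd]
  field_simp

lemma rpow_sub_helper {u : ℝ} (hu : 0 < u) (a b : ℝ) : u ^ a / u ^ b = u ^ (a - b) :=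
  (Real.rpow_sub hu a b).symm

lemma AA_abs_le {d S0 s u : ℝ} {φ : ℝ → ℝ} (hS0 : ∀ x, |φ x| ≤ S0) (hu : 0 < u) :
    |AA d φ s u| ≤ |d| * S0 * u ^ (-(1:ℝ)/4) := by
  have h14 : (0:ℝ) < u ^ (-(1:ℝ)/4) := rpow_pos_of_pos hu _
  rw [AA, abs_mul, abs_mul, abs_of_pos h14]
  calc |d| * (u ^ (-(1:ℝ)/4) * |φ (-u * s)|)
      ≤ |d| * (u ^ (-(1:ℝ)/4) * S0) := by
        refine mul_le_mul_of_nonneg_left ?_ (abs_nonneg d)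
        exact mul_le_mul_of_nonneg_left (hS0 _) h14.le
    _ = |d| * S0 * u ^ (-(1:ℝ)/4) := by ring

lemma AAd_abs_le {d S0 S1 s u : ℝ} {φ φ' : ℝ → ℝ} (hS0 : ∀ x, |φ x| ≤ S0)
    (hS1 : ∀ x, |x| * |φ' x| ≤ S1) (hs : 0 ≤ s) (hu : 0 < u) :
    |AAd d φ φ' s u| ≤ |d| * (S0/4 + S1) * u ^ (-(5:ℝ)/4) := by
  have h54 : (0:ℝ) < u ^ (-(5:ℝ)/4) := rpow_pos_of_pos hu _
  have h14 : (0:ℝ) < u ^ (-(1:ℝ)/4) := rpow_pos_of_pos hu _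
  have habs : |(-u * s)| = u * s := by
    rw [abs_mul, abs_neg, abs_of_pos hu, abs_of_nonneg hs]
  have hphi : |φ' (-u * s)| * s ≤ S1 / u := by
    rw [le_div_iff₀ hu]
    calc |φ' (-u * s)| * s * u = (u * s) * |φ' (-u * s)| := by ring
      _ = |(-u * s)| * |φ' (-u * s)| := by rw [habs]
      _ ≤ S1 := hS1 _
  have he0 : u ^ (-(1:ℝ)/4) / u = u ^ (-(5:ℝ)/4) := by
    rw [show -(5:ℝ)/4 = -(1:ℝ)/4 - 1 from by norm_num, Real.rpow_sub hu, Real.rpow_one]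
  have he : u ^ (-(1:ℝ)/4) * (S1 / u) = S1 * u ^ (-(5:ℝ)/4) := by
    rw [← he0]; ring
  rw [AAd, abs_mul]
  have hinner : |(-(1:ℝ)/4) * u ^ (-(5:ℝ)/4) * φ (-u * s) + u ^ (-(1:ℝ)/4) * (φ' (-u * s) * (-s))|
      ≤ (S0/4 + S1) * u ^ (-(5:ℝ)/4) := by
   calc |(-(1:ℝ)/4) * u ^ (-(5:ℝ)/4) * φ (-u * s) + u ^ (-(1:ℝ)/4) * (φ' (-u * s) * (-s))|
      ≤ |(-(1:ℝ)/4) * u ^ (-(5:ℝ)/4) * φ (-u * s)| + |u ^ (-(1:ℝ)/4) * (φ' (-u * s) * (-s))| :=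
        abs_add_le _ _
    _ = (1/4) * u ^ (-(5:ℝ)/4) * |φ (-u * s)| + u ^ (-(1:ℝ)/4) * (|φ' (-u * s)| * s) := by
        rw [abs_mul, abs_mul, abs_mul, abs_mul, abs_neg, abs_of_pos h54, abs_of_pos h14,
          abs_of_nonneg hs]
        norm_num
    _ ≤ (1/4) * u ^ (-(5:ℝ)/4) * S0 + u ^ (-(1:ℝ)/4) * (S1 / u) := by
        have t1 := mul_le_mul_of_nonneg_left (hS0 (-u * s)) (by positivity : (0:ℝ) ≤ (1/4) * u ^ (-(5:ℝ)/4))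
        have t2 := mul_le_mul_of_nonneg_left hphi h14.le
        linarith
    _ = (S0/4 + S1) * u ^ (-(5:ℝ)/4) := by rw [he]; ring
  calc |d| * |(-(1:ℝ)/4) * u ^ (-(5:ℝ)/4) * φ (-u * s) + u ^ (-(1:ℝ)/4) * (φ' (-u * s) * (-s))|
      ≤ |d| * ((S0/4 + S1) * u ^ (-(5:ℝ)/4)) := mul_le_mul_of_nonneg_left hinner (abs_nonneg d)
    _ = |d| * (S0/4 + S1) * u ^ (-(5:ℝ)/4) := by ring

lemma BB_abs_le {d k c S0 s u : ℝ} {φ : ℝ → ℝ}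
    (hS0 : ∀ x, |φ x| ≤ S0) (hu : 0 < u) (hc : 0 < c)
    (hPlb : c * u ^ ((1:ℝ)/2) ≤ PP k u) :
    |BB d k φ s u| ≤ |d| * S0 / c * u ^ (-(3:ℝ)/4) := by
  have hP0 : 0 < PP k u := lt_of_lt_of_le (by positivity) hPlb
  have hcu : (0:ℝ) < c * u ^ ((1:ℝ)/2) := by positivity
  have i2 : u ^ (-(1:ℝ)/4) / u ^ ((1:ℝ)/2) = u ^ (-(3:ℝ)/4) := by
    rw [← Real.rpow_sub hu]; norm_num
  rw [BB, abs_div, abs_of_pos hP0]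
  have hS0n : (0:ℝ) ≤ S0 := (abs_nonneg (φ 0)).trans (hS0 0)
  calc |AA d φ s u| / PP k u ≤ |d| * S0 * u ^ (-(1:ℝ)/4) / (c * u ^ ((1:ℝ)/2)) :=
        div_le_div₀ (by positivity) (AA_abs_le hS0 hu) hcu hPlb
    _ = |d| * S0 / c * u ^ (-(3:ℝ)/4) := by
        rw [← i2]; field_simp

lemma BBd_abs_le {d k c S0 S1 s u : ℝ} {φ φ' : ℝ → ℝ}
    (hS0 : ∀ x, |φ x| ≤ S0) (hS1 : ∀ x, |x| * |φ' x| ≤ S1) (hk : 0 ≤ k)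
    (hs : 0 ≤ s) (hu1 : 1 ≤ u) (hc : 0 < c)
    (hPlb : c * u ^ ((1:ℝ)/2) ≤ PP k u) :
    |BBd d k φ φ' s u| ≤
      (|d| * (S0/4 + S1) / c + |d| * S0 * (1/2 + k) / c^2) * u ^ (-(7:ℝ)/4) := by
  have hu : (0:ℝ) < u := by linarith
  have hP0 : 0 < PP k u := lt_of_lt_of_le (by positivity) hPlb
  have hcu : (0:ℝ) < c * u ^ ((1:ℝ)/2) := by positivity
  have i1 : u ^ (-(1:ℝ)/4) * u ^ (-(1:ℝ)/2) = u ^ (-(3:ℝ)/4) := by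
    rw [← Real.rpow_add hu]; norm_num
  have i2 : u ^ (-(5:ℝ)/4) / u ^ ((1:ℝ)/2) = u ^ (-(7:ℝ)/4) := by
    rw [← Real.rpow_sub hu]; norm_num
  have i3 : (u ^ ((1:ℝ)/2))^2 = u := by
    rw [← Real.rpow_natCast (u ^ ((1:ℝ)/2)) 2, ← Real.rpow_mul hu.le]
    norm_num
  have i4 : u ^ (-(3:ℝ)/4) / u = u ^ (-(7:ℝ)/4) := by
    rw [show -(7:ℝ)/4 = -(3:ℝ)/4 - 1 from by norm_num, Real.rpow_sub hu, Real.rpow_one]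
  have hS0n : (0:ℝ) ≤ S0 := (abs_nonneg (φ 0)).trans (hS0 0)
  have hS1n : (0:ℝ) ≤ S1 := by simpa using hS1 0
  have hnum : |AAd d φ φ' s u * PP k u - AA d φ s u * QQ k u|
      ≤ |d| * (S0/4 + S1) * u ^ (-(5:ℝ)/4) * PP k u
        + |d| * S0 * u ^ (-(1:ℝ)/4) * ((1/2 + k) * u ^ (-(1:ℝ)/2)) := by
    calc |AAd d φ φ' s u * PP k u - AA d φ s u * QQ k u|
        ≤ |AAd d φ φ' s u| * |PP k u| + |AA d φ s u| * |QQ k u| := by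
          refine (abs_sub _ _).trans ?_
          rw [abs_mul, abs_mul]
      _ ≤ |d| * (S0/4 + S1) * u ^ (-(5:ℝ)/4) * PP k u
          + |d| * S0 * u ^ (-(1:ℝ)/4) * ((1/2 + k) * u ^ (-(1:ℝ)/2)) := by
          rw [abs_of_pos hP0]
          refine add_le_add (mul_le_mul_of_nonneg_right (AAd_abs_le hS0 hS1 hs hu) hP0.le) ?_
          exact mul_le_mul (AA_abs_le hS0 hu) (QQ_abs_le hk hu1) (abs_nonneg _) (by positivity)
  rw [BBd, abs_div, abs_of_pos (pow_pos hP0 2)]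
  rw [div_le_iff₀ (pow_pos hP0 2)]
  have key1 : |d| * (S0/4 + S1) * u ^ (-(5:ℝ)/4) * PP k u
      ≤ |d| * (S0/4 + S1) / c * u ^ (-(7:ℝ)/4) * (PP k u)^2 := by
    have h1 : |d| * (S0/4 + S1) * u ^ (-(5:ℝ)/4)
        = |d| * (S0/4 + S1) / c * u ^ (-(7:ℝ)/4) * (c * u ^ ((1:ℝ)/2)) := by
      rw [← i2]; field_simp
    calc |d| * (S0/4 + S1) * u ^ (-(5:ℝ)/4) * PP k u
        = |d| * (S0/4 + S1) / c * u ^ (-(7:ℝ)/4) * (c * u ^ ((1:ℝ)/2)) * PP k u := by rw [h1]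
      _ ≤ |d| * (S0/4 + S1) / c * u ^ (-(7:ℝ)/4) * PP k u * PP k u := by
          have : (0:ℝ) ≤ |d| * (S0/4 + S1) / c * u ^ (-(7:ℝ)/4) := by positivity
          nlinarith [hPlb, hP0, mul_nonneg this hP0.le]
      _ = |d| * (S0/4 + S1) / c * u ^ (-(7:ℝ)/4) * (PP k u)^2 := by ring
  have key2 : |d| * S0 * u ^ (-(1:ℝ)/4) * ((1/2 + k) * u ^ (-(1:ℝ)/2))
      ≤ |d| * S0 * (1/2 + k) / c^2 * u ^ (-(7:ℝ)/4) * (PP k u)^2 := by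
    have hsq : c^2 * u ≤ (PP k u)^2 := by
      calc c^2 * u = (c * u ^ ((1:ℝ)/2))^2 := by rw [mul_pow, i3]
        _ ≤ (PP k u)^2 := by nlinarith [hcu, hPlb]
    have h1 : |d| * S0 * u ^ (-(1:ℝ)/4) * ((1/2 + k) * u ^ (-(1:ℝ)/2))
        = |d| * S0 * (1/2 + k) / c^2 * u ^ (-(7:ℝ)/4) * (c^2 * u) := by
      rw [← i4, ← i1]; field_simp
    rw [h1]
    exact mul_le_mul_of_nonneg_left hsq (by positivity)
  calc |AAd d φ φ' s u * PP k u - AA d φ s u * QQ k u|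
      ≤ |d| * (S0/4 + S1) * u ^ (-(5:ℝ)/4) * PP k u
        + |d| * S0 * u ^ (-(1:ℝ)/4) * ((1/2 + k) * u ^ (-(1:ℝ)/2)) := hnum
    _ ≤ |d| * (S0/4 + S1) / c * u ^ (-(7:ℝ)/4) * (PP k u)^2
        + |d| * S0 * (1/2 + k) / c^2 * u ^ (-(7:ℝ)/4) * (PP k u)^2 := add_le_add key1 key2
    _ = (|d| * (S0/4 + S1) / c + |d| * S0 * (1/2 + k) / c^2) * u ^ (-(7:ℝ)/4) * (PP k u)^2 := by
        ring

lemma continuousAt_rpow_aux {u : ℝ} (hu : 0 < u) (a : ℝ) :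
    ContinuousAt (fun v : ℝ => v ^ a) u :=
  Real.continuousAt_rpow_const u a (Or.inl hu.ne')

lemma continuousAt_sinBBd {d k s u : ℝ} {Ψ φ φ' : ℝ → ℝ}
    (hφc : Continuous φ) (hφ'c : Continuous φ')
    (hΨc : ContinuousAt Ψ u) (hu : 0 < u) (hPne : PP k u ≠ 0) :
    ContinuousAt (fun v => Real.sin (Ψ v) * BBd d k φ φ' s v) u := by
  have clin : ContinuousAt (fun v : ℝ => -v * s) u := by fun_prop
  have cφ : ContinuousAt (fun v : ℝ => φ (-v * s)) u := (hφc.continuousAt).comp clin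
  have cφ' : ContinuousAt (fun v : ℝ => φ' (-v * s)) u := (hφ'c.continuousAt).comp clin
  have cAA : ContinuousAt (fun v => AA d φ s v) u := by
    unfold AA
    exact (((continuousAt_rpow_aux hu _).mul cφ).const_mul d)
  have cAAd : ContinuousAt (fun v => AAd d φ φ' s v) u := by
    unfold AAd
    exact ((((continuousAt_rpow_aux hu _).const_mul _).mul cφ).add
      ((continuousAt_rpow_aux hu _).mul (cφ'.mul continuousAt_const))).const_mul d
  have cPP : ContinuousAt (PP k) u := (hasDerivAt_PP hu).continuousAt
  have cQQ : ContinuousAt (QQ k) u := by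
    unfold QQ
    exact ((continuousAt_rpow_aux hu _).const_mul _).add
      (continuousAt_const.div ((continuous_pow 2).continuousAt) (pow_ne_zero 2 hu.ne'))
  have cBBd : ContinuousAt (fun v => BBd d k φ φ' s v) u := by
    unfold BBd
    exact ((cAAd.mul cPP).sub (cAA.mul cQQ)).div (cPP.pow 2) (pow_ne_zero 2 hPne)
  exact (Real.continuous_sin.continuousAt.comp hΨc).mul cBBd

lemma continuousAt_cosAA {d s u : ℝ} {Ψ φ : ℝ → ℝ}
    (hφc : Continuous φ) (hΨc : ContinuousAt Ψ u) (hu : 0 < u) :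
    ContinuousAt (fun v => Real.cos (Ψ v) * AA d φ s v) u := by
  have clin : ContinuousAt (fun v : ℝ => -v * s) u := by fun_prop
  have cφ : ContinuousAt (fun v : ℝ => φ (-v * s)) u := (hφc.continuousAt).comp clin
  exact (Real.continuous_cos.continuousAt.comp hΨc).mul
    (((continuousAt_rpow_aux hu _).mul cφ).const_mul d)

lemma continuous_s_BBd {d k u : ℝ} {φ φ' : ℝ → ℝ}
    (hφc : Continuous φ) (hφ'c : Continuous φ') :
    Continuous (fun s => BBd d k φ φ' s u) := by
  have clin : Continuous (fun s : ℝ => -u * s) := by fun_prop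
  have cφ : Continuous (fun s : ℝ => φ (-u * s)) := hφc.comp clin
  have cφ' : Continuous (fun s : ℝ => φ' (-u * s)) := hφ'c.comp clin
  unfold BBd AAd AA
  fun_prop

lemma continuous_s_HH {d k z : ℝ} {Ψ φ : ℝ → ℝ} (hφc : Continuous φ) :
    Continuous (fun s => HH d k Ψ φ s z) := by
  have clin : Continuous (fun s : ℝ => -z * s) := by fun_prop
  have cφ : Continuous (fun s : ℝ => φ (-z * s)) := hφc.comp clin
  unfold HH BB AA
  fun_prop

lemma HH_abs_le {d k c S0 s u : ℝ} {Ψ φ : ℝ → ℝ}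
    (hS0 : ∀ x, |φ x| ≤ S0) (hu : 0 < u) (hc : 0 < c)
    (hPlb : c * u ^ ((1:ℝ)/2) ≤ PP k u) :
    |HH d k Ψ φ s u| ≤ |d| * S0 / c * u ^ (-(3:ℝ)/4) := by
  rw [HH, abs_mul]
  calc |Real.sin (Ψ u)| * |BB d k φ s u| ≤ 1 * |BB d k φ s u| :=
        mul_le_mul_of_nonneg_right (Real.abs_sin_le_one _) (abs_nonneg _)
    _ = |BB d k φ s u| := one_mul _
    _ ≤ |d| * S0 / c * u ^ (-(3:ℝ)/4) := BB_abs_le hS0 hu hc hPlb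

lemma sinBBd_abs_le {d k c S0 S1 s u : ℝ} {Ψ φ φ' : ℝ → ℝ}
    (hS0 : ∀ x, |φ x| ≤ S0) (hS1 : ∀ x, |x| * |φ' x| ≤ S1) (hk : 0 ≤ k)
    (hs : 0 ≤ s) (hu1 : 1 ≤ u) (hc : 0 < c)
    (hPlb : c * u ^ ((1:ℝ)/2) ≤ PP k u) :
    |Real.sin (Ψ u) * BBd d k φ φ' s u| ≤
      (|d| * (S0/4 + S1) / c + |d| * S0 * (1/2 + k) / c^2) * u ^ (-(7:ℝ)/4) := by
  rw [abs_mul]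
  calc |Real.sin (Ψ u)| * |BBd d k φ φ' s u| ≤ 1 * |BBd d k φ φ' s u| :=
        mul_le_mul_of_nonneg_right (Real.abs_sin_le_one _) (abs_nonneg _)
    _ = |BBd d k φ φ' s u| := one_mul _
    _ ≤ _ := BBd_abs_le hS0 hS1 hk hs hu1 hc hPlb

lemma cosAA_abs_le {d S2 s u : ℝ} {Ψ φ : ℝ → ℝ}
    (hS2 : ∀ x, |x| * |φ x| ≤ S2) (hs : 0 < s) (hu : 0 < u) :
    |Real.cos (Ψ u) * AA d φ s u| ≤ |d| * S2 / s * u ^ (-(5:ℝ)/4) := by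
  have h14 : (0:ℝ) < u ^ (-(1:ℝ)/4) := rpow_pos_of_pos hu _
  have hus : (0:ℝ) < u * s := by positivity
  have hφb : |φ (-u * s)| ≤ S2 / (u * s) := by
    rw [le_div_iff₀ hus]
    calc |φ (-u * s)| * (u * s) = |(-u * s)| * |φ (-u * s)| := by
          rw [abs_mul, abs_neg, abs_of_pos hu, abs_of_pos hs]; ring
      _ ≤ S2 := hS2 _
  have i5 : u ^ (-(1:ℝ)/4) / u = u ^ (-(5:ℝ)/4) := by
    rw [show -(5:ℝ)/4 = -(1:ℝ)/4 - 1 from by norm_num, Real.rpow_sub hu, Real.rpow_one]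
  rw [abs_mul]
  calc |Real.cos (Ψ u)| * |AA d φ s u| ≤ 1 * |AA d φ s u| :=
        mul_le_mul_of_nonneg_right (Real.abs_cos_le_one _) (abs_nonneg _)
    _ = |d| * (u ^ (-(1:ℝ)/4) * |φ (-u * s)|) := by rw [one_mul, AA, abs_mul, abs_mul,
          abs_of_pos h14]
    _ ≤ |d| * (u ^ (-(1:ℝ)/4) * (S2 / (u * s))) := by
        refine mul_le_mul_of_nonneg_left ?_ (abs_nonneg d)
        exact mul_le_mul_of_nonneg_left hφb h14.le
    _ = |d| * S2 / s * u ^ (-(5:ℝ)/4) := by rw [← i5]; field_simp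

/-- For the oscillatory tail `g` and a Schwartz function `φ`, the limit
`lim_{t→0⁺} ∫_{-∞}^{-z} g(x) φ(x t^{1/3}) dx` exists and is `O(z^{-3/4})`
uniformly: there is `C > 0` with `|limit| ≤ C z^{-3/4}` for all `z ≥ x₀`. -/
theorem oscillatory_tail_limit_bound (d φ₀ x₀ : ℝ) (hx₀ : 1 < x₀)
    (Ψ : ℝ → ℝ)
    (hΨ : ∀ x : ℝ, Ψ x = (2/3) * x ^ ((3:ℝ)/2) - (3/4) * d^2 * Real.log x + φ₀)
    (hΨ' : ∀ x ≥ x₀, x ^ ((1:ℝ)/2) - (3/4) * d^2 / x ≠ 0)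
    (g : ℝ → ℝ)
    (hg : ∀ x : ℝ, g x = if x < -x₀ then d * (-x) ^ (-(1:ℝ)/4) * Real.cos (Ψ (-x)) else 0)
    (φ : SchwartzMap ℝ ℝ) :
    ∃ C > (0:ℝ), ∀ z ≥ x₀, ∃ L : ℝ,
      Tendsto (fun t : ℝ => ∫ x in Set.Iio (-z), g x * φ (x * t ^ ((1:ℝ)/3)))
        (nhdsWithin 0 (Set.Ioi 0)) (nhds L) ∧
      |L| ≤ C * z ^ (-(3:ℝ)/4) := by
  have hk0 : (0:ℝ) ≤ (3/4) * d^2 := by positivity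
  set k : ℝ := (3/4) * d^2 with hkdef
  have hP : ∀ x ≥ x₀, PP k x ≠ 0 := fun x hx => by
    have := hΨ' x hx; rw [PP]; exact this
  have hΨk : ∀ x, Ψ x = (2/3) * x ^ ((3:ℝ)/2) - k * Real.log x + φ₀ := hΨ
  have hc : 0 < 1 - k / x₀ ^ ((3:ℝ)/2) := cc_pos hk0 hx₀ hP
  set c : ℝ := 1 - k / x₀ ^ ((3:ℝ)/2) with hcdef
  set φD : ℝ → ℝ := fun x => (SchwartzMap.derivCLM ℝ ℝ φ) x with hφD
  have hφDc : Continuous φD := (SchwartzMap.derivCLM ℝ ℝ φ).continuous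
  have hφd : ∀ x, HasDerivAt φ (φD x) x := fun x => by
    simpa [hφD, SchwartzMap.derivCLM_apply] using φ.differentiableAt.hasDerivAt
  obtain ⟨S0, hS0pos, hS0'⟩ := φ.decay 0 0
  have hS0 : ∀ x, |(φ : ℝ → ℝ) x| ≤ S0 := fun x => by
    simpa [norm_iteratedFDeriv_zero, Real.norm_eq_abs] using hS0' x
  obtain ⟨S1, hS1pos, hS1'⟩ := (SchwartzMap.derivCLM ℝ ℝ φ).decay 1 0
  have hS1 : ∀ x, |x| * |φD x| ≤ S1 := fun x => by
    simpa [hφD, norm_iteratedFDeriv_zero, Real.norm_eq_abs] using hS1' x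
  obtain ⟨S2, hS2pos, hS2'⟩ := φ.decay 1 0
  have hS2 : ∀ x, |x| * |(φ : ℝ → ℝ) x| ≤ S2 := fun x => by
    simpa [norm_iteratedFDeriv_zero, Real.norm_eq_abs] using hS2' x
  set K : ℝ := |d| * (S0/4 + S1) / c + |d| * S0 * (1/2 + k) / c^2 with hKdef
  have hKn : 0 ≤ K := by
    have h1 : 0 ≤ |d| * (S0/4 + S1) / c :=
      div_nonneg (mul_nonneg (abs_nonneg d) (by linarith [hS0pos.le, hS1pos.le])) hc.le
    have h2 : 0 ≤ |d| * S0 * (1/2 + k) / c^2 :=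
      div_nonneg (mul_nonneg (mul_nonneg (abs_nonneg d) hS0pos.le) (by linarith)) (by positivity)
    rw [hKdef]; linarith
  have hBn : 0 ≤ |d| * S0 / c := div_nonneg (mul_nonneg (abs_nonneg d) hS0pos.le) hc.le
  have hCpos : 0 < |d| * S0 / c + (4/3) * K + 1 := by
    clear_value K c
    linarith
  refine ⟨|d| * S0 / c + (4/3) * K + 1, hCpos, fun z hz => ?_⟩
  have hz1 : (1:ℝ) < z := lt_of_lt_of_le hx₀ hz
  have hz0 : (0:ℝ) < z := by linarith
  have hPlb : ∀ u : ℝ, z ≤ u → c * u ^ ((1:ℝ)/2) ≤ PP k u := fun u hu => by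
    rw [hcdef]; exact PP_lb hk0 hx₀ (le_trans hz hu)
  have hΨcont : ∀ u : ℝ, 0 < u → ContinuousAt Ψ u :=
    fun u hu => (hasDerivAt_Psi hΨk hu).continuousAt
  have hmeas : ∀ s : ℝ, AEStronglyMeasurable (fun u => Real.sin (Ψ u) * BBd d k φ φD s u)
      (volume.restrict (Set.Ioi z)) := fun s => by
    refine ContinuousOn.aestronglyMeasurable (fun u hu => ?_) measurableSet_Ioi
    have hu0 : (0:ℝ) < u := lt_trans hz0 hu
    exact (continuousAt_sinBBd φ.continuous hφDc (hΨcont u hu0) hu0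
      (hP u (le_trans hz (le_of_lt hu)))).continuousWithinAt
  have hIb : ∀ s : ℝ, 0 ≤ s →
      IntegrableOn (fun u => Real.sin (Ψ u) * BBd d k φ φD s u) (Set.Ioi z) := fun s hs => by
    refine Integrable.mono' ((integrableOn_Ioi_rpow_of_lt (a := -(7:ℝ)/4) (by norm_num) hz0).const_mul K)
      (hmeas s) ?_
    refine (ae_restrict_iff' measurableSet_Ioi).2 (ae_of_all _ fun u hu => ?_)
    rw [Real.norm_eq_abs]
    exact sinBBd_abs_le hS0 hS1 hk0 hs (by rw [Set.mem_Ioi] at hu; linarith) hc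
      (hPlb u (le_of_lt hu))
  have hIBP : ∀ s : ℝ, 0 < s →
      (∫ u in Set.Ioi z, Real.cos (Ψ u) * AA d φ s u)
        = -(HH d k Ψ φ s z) - ∫ u in Set.Ioi z, Real.sin (Ψ u) * BBd d k φ φD s u := by
    intro s hs
    have hderiv : ∀ u ∈ Set.Ioi z, HasDerivAt (HH d k Ψ φ s) (HHd d k Ψ φ φD s u) u := by
      intro u hu
      have hu0 : (0:ℝ) < u := lt_trans hz0 hu
      exact hasDerivAt_HH hφd (hasDerivAt_Psi hΨk hu0) hu0
        (hP u (le_trans hz (le_of_lt hu))) s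
    have hIc : IntegrableOn (fun u => Real.cos (Ψ u) * AA d φ s u) (Set.Ioi z) := by
      refine Integrable.mono' ((integrableOn_Ioi_rpow_of_lt (a := -(5:ℝ)/4) (by norm_num) hz0).const_mul
        (|d| * S2 / s)) ?_ ?_
      · refine ContinuousOn.aestronglyMeasurable (fun u hu => ?_) measurableSet_Ioi
        have hu0 : (0:ℝ) < u := lt_trans hz0 hu
        exact (continuousAt_cosAA φ.continuous (hΨcont u hu0) hu0).continuousWithinAt
      · refine (ae_restrict_iff' measurableSet_Ioi).2 (ae_of_all _ fun u hu => ?_)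
        rw [Real.norm_eq_abs]
        exact cosAA_abs_le hS2 hs (lt_trans hz0 hu)
    have hIH : IntegrableOn (HHd d k Ψ φ φD s) (Set.Ioi z) := by
      have : HHd d k Ψ φ φD s = fun u =>
          Real.cos (Ψ u) * AA d φ s u + Real.sin (Ψ u) * BBd d k φ φD s u := rfl
      rw [this]
      exact hIc.add (hIb s hs.le)
    have htend : Tendsto (HH d k Ψ φ s) atTop (𝓝 0) := by
      have hg0 : Tendsto (fun u : ℝ => |d| * S0 / c * u ^ (-(3:ℝ)/4)) atTop (𝓝 0) := by
        have h0 := tendsto_rpow_neg_atTop (show (0:ℝ) < 3/4 by norm_num)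
        have h1 : Tendsto (fun u : ℝ => u ^ (-(3:ℝ)/4)) atTop (𝓝 0) := by
          convert h0 using 2; norm_num
        simpa using h1.const_mul (|d| * S0 / c)
      refine squeeze_zero_norm' ?_ hg0
      filter_upwards [Filter.eventually_ge_atTop z] with u hu
      rw [Real.norm_eq_abs]
      exact HH_abs_le hS0 (lt_of_lt_of_le hz0 hu) hc (hPlb u hu)
    have hcont : ContinuousWithinAt (HH d k Ψ φ s) (Set.Ici z) z :=
      ((hasDerivAt_HH hφd (hasDerivAt_Psi hΨk hz0) hz0 (hP z hz) s).continuousAt).continuousWithinAt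
    have h0 := integral_Ioi_of_hasDerivAt_of_tendsto hcont hderiv hIH htend
    have hsplit : ∫ u in Set.Ioi z, HHd d k Ψ φ φD s u
        = (∫ u in Set.Ioi z, Real.cos (Ψ u) * AA d φ s u)
          + ∫ u in Set.Ioi z, Real.sin (Ψ u) * BBd d k φ φD s u := by
      rw [← integral_add hIc (hIb s hs.le)]
      rfl
    rw [hsplit] at h0
    linarith [h0]
  have hCoV : ∀ s : ℝ, (∫ x in Set.Iio (-z), g x * φ (x * s))
      = ∫ u in Set.Ioi z, Real.cos (Ψ u) * AA d φ s u := by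
    intro s
    rw [← integral_Iic_eq_integral_Iio, ← integral_comp_neg_Ioi]
    refine setIntegral_congr_fun measurableSet_Ioi (fun u hu => ?_)
    rw [Set.mem_Ioi] at hu
    rw [hg, if_pos (by linarith : -u < -x₀), neg_neg, AA]
    ring
  refine ⟨-(HH d k Ψ φ 0 z) - ∫ u in Set.Ioi z, Real.sin (Ψ u) * BBd d k φ φD 0 u, ?_, ?_⟩
  · -- the limit
    have hs3 : Tendsto (fun t : ℝ => t ^ ((1:ℝ)/3)) (nhdsWithin 0 (Set.Ioi 0)) (𝓝 0) := by
      have hca : ContinuousAt (fun t : ℝ => t ^ ((1:ℝ)/3)) 0 :=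
        Real.continuousAt_rpow_const 0 _ (Or.inr (by norm_num))
      have h := hca.tendsto
      rw [Real.zero_rpow (by norm_num)] at h
      exact h.mono_left nhdsWithin_le_nhds
    have hbdry : Tendsto (fun t : ℝ => HH d k Ψ φ (t ^ ((1:ℝ)/3)) z)
        (nhdsWithin 0 (Set.Ioi 0)) (𝓝 (HH d k Ψ φ 0 z)) :=
      ((continuous_s_HH φ.continuous).tendsto 0).comp hs3
    have hDCT : Tendsto
        (fun t : ℝ => ∫ u in Set.Ioi z, Real.sin (Ψ u) * BBd d k φ φD (t ^ ((1:ℝ)/3)) u)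
        (nhdsWithin 0 (Set.Ioi 0))
        (𝓝 (∫ u in Set.Ioi z, Real.sin (Ψ u) * BBd d k φ φD 0 u)) := by
      refine tendsto_integral_filter_of_dominated_convergence (fun u => K * u ^ (-(7:ℝ)/4))
        (Filter.Eventually.of_forall (fun t => hmeas _)) ?_
        ((integrableOn_Ioi_rpow_of_lt (a := -(7:ℝ)/4) (by norm_num) hz0).const_mul K) ?_
      · filter_upwards [self_mem_nhdsWithin] with t ht
        refine (ae_restrict_iff' measurableSet_Ioi).2 (ae_of_all _ fun u hu => ?_)
        rw [Real.norm_eq_abs]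
        rw [Set.mem_Ioi] at hu
        exact sinBBd_abs_le hS0 hS1 hk0 (Real.rpow_nonneg (le_of_lt ht) _) (by linarith) hc
          (hPlb u hu.le)
      · refine ae_of_all _ (fun u => ?_)
        have hcs : Tendsto (fun s : ℝ => Real.sin (Ψ u) * BBd d k φ φD s u) (𝓝 0)
            (𝓝 (Real.sin (Ψ u) * BBd d k φ φD 0 u)) :=
          ((continuous_const.mul (continuous_s_BBd φ.continuous hφDc)).tendsto 0)
        exact hcs.comp hs3
    have hT := hbdry.neg.sub hDCT
    refine Filter.Tendsto.congr' ?_ hT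
    filter_upwards [self_mem_nhdsWithin] with t ht
    rw [Set.mem_Ioi] at ht
    rw [hCoV (t ^ ((1:ℝ)/3)), hIBP (t ^ ((1:ℝ)/3)) (Real.rpow_pos_of_pos ht _)]
  · -- the bound
    have hH0 : |HH d k Ψ φ 0 z| ≤ |d| * S0 / c * z ^ (-(3:ℝ)/4) :=
      HH_abs_le hS0 hz0 hc (hPlb z le_rfl)
    have hIbound : |∫ u in Set.Ioi z, Real.sin (Ψ u) * BBd d k φ φD 0 u|
        ≤ K * ((4/3) * z ^ (-(3:ℝ)/4)) := by
      have h1 : ‖∫ u in Set.Ioi z, Real.sin (Ψ u) * BBd d k φ φD 0 u‖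
          ≤ ∫ u in Set.Ioi z, K * u ^ (-(7:ℝ)/4) := by
        refine norm_integral_le_of_norm_le
          ((integrableOn_Ioi_rpow_of_lt (a := -(7:ℝ)/4) (by norm_num) hz0).const_mul K) ?_
        refine (ae_restrict_iff' measurableSet_Ioi).2 (ae_of_all _ fun u hu => ?_)
        rw [Real.norm_eq_abs]
        rw [Set.mem_Ioi] at hu
        exact sinBBd_abs_le hS0 hS1 hk0 le_rfl (by linarith) hc (hPlb u hu.le)
      have h2 : ∫ u in Set.Ioi z, K * u ^ (-(7:ℝ)/4) = K * ((4/3) * z ^ (-(3:ℝ)/4)) := by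
        rw [integral_const_mul, integral_Ioi_rpow_of_lt (by norm_num) hz0]
        rw [show (-(7:ℝ)/4 + 1) = -(3:ℝ)/4 by norm_num]
        ring
      rw [Real.norm_eq_abs] at h1
      linarith [h1, h2.le, h2.ge]
    have hzp : (0:ℝ) < z ^ (-(3:ℝ)/4) := rpow_pos_of_pos hz0 _
    calc |(-(HH d k Ψ φ 0 z)) - ∫ u in Set.Ioi z, Real.sin (Ψ u) * BBd d k φ φD 0 u|
        ≤ |(-(HH d k Ψ φ 0 z))| + |∫ u in Set.Ioi z, Real.sin (Ψ u) * BBd d k φ φD 0 u| :=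
          abs_sub _ _
      _ = |HH d k Ψ φ 0 z| + |∫ u in Set.Ioi z, Real.sin (Ψ u) * BBd d k φ φD 0 u| := by
          rw [abs_neg]
      _ ≤ |d| * S0 / c * z ^ (-(3:ℝ)/4) + K * ((4/3) * z ^ (-(3:ℝ)/4)) := add_le_add hH0 hIbound
      _ ≤ (|d| * S0 / c + (4/3) * K + 1) * z ^ (-(3:ℝ)/4) := by nlinarith [hzp]
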